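/- Let G be a topological group acting continuously on a compact Hausdorff space X, let K be a compact subgroup of G, let x ∈ X be a point with trivial stabilizer (G_x = {e}), and let g ∈ G with g ∉ K. Then there exists a K-invariant open neighborhood U of x such that U ∩ gU = ∅. -/

import Mathlib

open Pointwise

/-- Let `G` be a topological group acting continuously on a compact
Hausdorff space `X`, let `K` be a compact subgroup of `G`, let `x ∈ X` have trivial
stabilizer, and let `g ∉ K`. Then there is a `K`-invariant open neighborhood `U` of `x`
with `U ∩ g • U = ∅`. -/
theorem stmt0 {G X : Type*} [Group G] [TopologicalSpace G] [IsTopologicalGroup G]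
    [TopologicalSpace X] [CompactSpace X] [T2Space X]
    [MulAction G X] [ContinuousSMul G X]
    (K : Subgroup G) (hK : IsCompact (K : Set G))
    (x : X) (hx : ∀ h : G, h • x = x → h = 1)
    (g : G) (hg : g ∉ K) :
    ∃ U : Set X, IsOpen U ∧ x ∈ U ∧ (∀ k ∈ K, k • U = U) ∧ U ∩ g • U = ∅ := by
  -- The compact sets K • x and gK • x are disjoint
  have hc1 : IsCompact ((fun k : G => k • x) '' (K : Set G)) :=
    hK.image (continuous_id.smul continuous_const)
  have hc2 : IsCompact ((fun k : G => (g * k) • x) '' (K : Set G)) :=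
    hK.image ((continuous_const.mul continuous_id).smul continuous_const)
  have hdisj : Disjoint ((fun k : G => k • x) '' (K : Set G))
      ((fun k : G => (g * k) • x) '' (K : Set G)) := by
    rw [Set.disjoint_left]
    rintro _ ⟨k, hk, rfl⟩ ⟨k', hk', heq⟩
    have heq' : (g * k') • x = k • x := heq
    have h0 : ((g * k')⁻¹ * k) • x = x := by
      rw [mul_smul, ← heq', inv_smul_smul]
    have h1 : (g * k')⁻¹ * k = 1 := hx _ h0
    have h2 : g * k' = k := by rwa [inv_mul_eq_one] at h1
    apply hg
    have : g = k * k'⁻¹ := by rw [← h2, mul_inv_cancel_right]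
    rw [this]
    exact K.mul_mem hk (K.inv_mem hk')
  obtain ⟨W1, W2, hW1, hW2, hs1, hs2, hWd⟩ :=
    SeparatedNhds.of_isCompact_isCompact hc1 hc2 hdisj
  -- tube lemma to get V ∋ x with k • V ⊆ W1 and (g*k) • V ⊆ W2 for all k ∈ K
  set n : Set (G × X) := {p | p.1 • p.2 ∈ W1 ∧ (g * p.1) • p.2 ∈ W2} with hn
  have hno : IsOpen n := by
    apply IsOpen.inter
    · exact hW1.preimage (continuous_fst.smul continuous_snd)
    · exact hW2.preimage ((continuous_const.mul continuous_fst).smul continuous_snd)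
  have hsub : (K : Set G) ×ˢ ({x} : Set X) ⊆ n := by
    rintro ⟨k, y⟩ ⟨hk, hy⟩
    rcases hy with rfl
    exact ⟨hs1 ⟨k, hk, rfl⟩, hs2 ⟨k, hk, rfl⟩⟩
  obtain ⟨u, V, huo, hVo, hKu, hxV, huv⟩ :=
    generalized_tube_lemma hK isCompact_singleton hno hsub
  -- U = K • V
  refine ⟨⋃ k : K, (k : G) • V, isOpen_iUnion fun k => hVo.smul _, ?_, ?_, ?_⟩
  · exact Set.mem_iUnion.2 ⟨⟨1, K.one_mem⟩, by simpa using hxV rfl⟩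
  · have hsubU : ∀ k ∈ K, k • (⋃ k' : K, (k' : G) • V) ⊆ ⋃ k' : K, (k' : G) • V := by
      intro k hk y hy
      rw [Set.smul_set_iUnion] at hy
      rcases Set.mem_iUnion.1 hy with ⟨k', hk'⟩
      rw [smul_smul] at hk'
      exact Set.mem_iUnion.2 ⟨⟨k * k', K.mul_mem hk k'.2⟩, hk'⟩
    intro k hk
    apply subset_antisymm (hsubU k hk)
    intro y hy
    have h2 := hsubU k⁻¹ (K.inv_mem hk) ⟨y, hy, rfl⟩
    exact ⟨k⁻¹ • y, h2, smul_inv_smul k y⟩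
  · ext y
    simp only [Set.mem_inter_iff, Set.mem_empty_iff_false, iff_false, not_and]
    rintro h1 ⟨z, hz, rfl⟩
    rcases Set.mem_iUnion.1 h1 with ⟨k, v, hv, hkv⟩
    rcases Set.mem_iUnion.1 hz with ⟨k', v', hv', rfl⟩
    have hm1 : ((k : G), v) ∈ u ×ˢ V := ⟨hKu k.2, hv⟩
    have hm2 : ((k' : G), v') ∈ u ×ˢ V := ⟨hKu k'.2, hv'⟩
    have hyW1 : (k : G) • v ∈ W1 := (huv hm1).1
    have hyW2 : (g * (k' : G)) • v' ∈ W2 := (huv hm2).2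
    have heq2 : (k : G) • v = g • (k' : G) • v' := hkv
    rw [heq2, ← mul_smul] at hyW1
    exact Set.disjoint_left.1 hWd hyW1 hyW2
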